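/- The continuous truth-table reducibility ≤_ct, defined by f ≤_ct g iff f ≤₂ ⌈gⁿ⌉_{n∈ℕ} (where gⁿ is the n-fold product function of g), is reflexive and transitive; transitivity follows from the equivalence ⌈fⁿ⌉_{n∈ℕ} ≡₂ (⌈fⁿ⌉_{n∈ℕ})^m for every function f and natural number m ≥ 1. -/

import Mathlib

universe u

def Red2 {X₁ Y₁ X₂ Y₂ : Type*}
    [TopologicalSpace X₁] [TopologicalSpace Y₁] [TopologicalSpace X₂] [TopologicalSpace Y₂]
    (f : X₁ → Y₁) (g : X₂ → Y₂) : Prop :=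
  ∃ (A : Set (X₁ × Y₂)) (F : A → Y₁) (G : X₁ → X₂),
    Continuous F ∧ Continuous G ∧
      ∀ x : X₁, ∃ h : (x, g (G x)) ∈ A, f x = F ⟨(x, g (G x)), h⟩

def coprodMap {I : Type*} {X Y : I → Type*} (f : ∀ i, X i → Y i) :
    (Σ i, X i) → Σ i, Y i :=
  fun p => ⟨p.1, f p.1 p.2⟩

/-- The `n`-fold product function `gⁿ`. -/
def funPow {X Y : Type*} (n : ℕ) (g : X → Y) : (Fin n → X) → (Fin n → Y) :=
  fun v i => g (v i)

/-- `⌈gⁿ⌉_{n∈ℕ}`. -/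
def ctSup {X Y : Type*} (g : X → Y) : (Σ n : ℕ, Fin n → X) → Σ n : ℕ, Fin n → Y :=
  coprodMap fun n => funPow n g

/-- Continuous truth-table reducibility: `f ≤_ct g ⟺ f ≤₂ ⌈gⁿ⌉_{n∈ℕ}`. -/
def ctRed {X₁ Y₁ X₂ Y₂ : Type*}
    [TopologicalSpace X₁] [TopologicalSpace Y₁] [TopologicalSpace X₂] [TopologicalSpace Y₂]
    (f : X₁ → Y₁) (g : X₂ → Y₂) : Prop :=
  Red2 f (ctSup g)

noncomputable section CTAux

/-- Equiv between a sigma of `Fin`s and a single `Fin`. -/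
def fse {n : ℕ} (κ : Fin n → ℕ) : (Σ i : Fin n, Fin (κ i)) ≃ Fin (∑ i, κ i) :=
  (Fintype.equivFin _).trans (finCongr (by simp))

/-- The fiber of a sigma type over `c` is homeomorphic to `π c`. -/
def sigmaFiber {ι : Type*} {π : ι → Type*} [∀ i, TopologicalSpace (π i)] (c : ι) :
    π c ≃ₜ {s : Σ i, π i | s.1 = c} :=
  ((Topology.IsOpenEmbedding.sigmaMk (i := c)).isEmbedding.toHomeomorph).trans
    (Homeomorph.setCongr (by
      ext s
      constructor
      · rintro ⟨x, rfl⟩; rfl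
      · intro hs
        obtain ⟨i, x⟩ := s
        cases hs
        exact ⟨x, rfl⟩))

theorem sigmaFiber_symm_apply {ι : Type*} {π : ι → Type*} [∀ i, TopologicalSpace (π i)] {c : ι}
    (s : Σ i, π i) (h : s.1 = c) :
    (sigmaFiber c).symm ⟨s, h⟩ = h ▸ s.2 := by
  subst h
  obtain ⟨i, x⟩ := s
  have : (⟨⟨i, x⟩, rfl⟩ : {s : Σ i, π i | s.1 = i}) = sigmaFiber i x := Subtype.ext rfl
  rw [this, Homeomorph.symm_apply_apply]

/-- Flattening a tuple of tuples. -/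
def pk {Z : Type*} : (Σ n : ℕ, Fin n → Σ k : ℕ, Fin k → Z) → Σ N : ℕ, Fin N → Z :=
  fun s => ⟨∑ i, (s.2 i).1, fun j =>
    (s.2 ((fse fun i => (s.2 i).1).symm j).1).2 ((fse fun i => (s.2 i).1).symm j).2⟩

/-- Unflattening with known shape `κ`. -/
def unpk {Z : Type*} {n : ℕ} (κ : Fin n → ℕ) (w : Fin (∑ i, κ i) → Z) :
    Fin n → Σ k : ℕ, Fin k → Z :=
  fun i => ⟨κ i, fun a => w (fse κ ⟨i, a⟩)⟩

theorem unpk_pk {Z : Type*} {n : ℕ} (u : Fin n → Σ k : ℕ, Fin k → Z) :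
    unpk (fun i => (u i).1) (pk ⟨n, u⟩).2 = u := by
  funext i
  have h2 : ∀ a : Fin (u i).1, (pk ⟨n, u⟩).2 (fse (fun i => (u i).1) ⟨i, a⟩) = (u i).2 a := by
    intro a
    show (u ((fse fun i => (u i).1).symm (fse (fun i => (u i).1) ⟨i, a⟩)).1).2 _ = _
    rw [Equiv.symm_apply_apply]
  show (⟨(u i).1, fun a => (pk ⟨n, u⟩).2 (fse (fun i => (u i).1) ⟨i, a⟩)⟩ : Σ k : ℕ, Fin k → Z)
      = u i
  rw [show (fun a => (pk ⟨n, u⟩).2 (fse (fun i => (u i).1) ⟨i, a⟩)) = (u i).2 from funext h2]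

theorem unpk_cont {Z : Type*} [TopologicalSpace Z] {n : ℕ} (κ : Fin n → ℕ) :
    Continuous (unpk (Z := Z) κ) :=
  continuous_pi fun _ => continuous_sigmaMk.comp (continuous_pi fun _ => continuous_apply _)

theorem isOpen_fiber {ι : Type*} {π : ι → Type*} [∀ i, TopologicalSpace (π i)] (c : ι) :
    IsOpen {s : Σ i, π i | s.1 = c} := by
  rw [isOpen_sigma_iff]
  intro i
  rcases eq_or_ne i c with rfl | h
  · convert isOpen_univ
    ext x; simp
  · convert isOpen_empty
    ext x; simp [h]

theorem isOpen_shape {Z : Type*} [TopologicalSpace Z] {n : ℕ} (κ : Fin n → ℕ) :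
    IsOpen {u : Fin n → Σ k : ℕ, Fin k → Z | ∀ i, (u i).1 = κ i} := by
  have : {u : Fin n → Σ k : ℕ, Fin k → Z | ∀ i, (u i).1 = κ i}
      = ⋂ i, (fun u : Fin n → Σ k : ℕ, Fin k → Z => u i) ⁻¹' {s | s.1 = κ i} := by
    ext u; simp [Set.mem_iInter]
  rw [this]
  exact isOpen_iInter_of_finite fun i => (isOpen_fiber (κ i)).preimage (continuous_apply i)

theorem continuous_of_cover {W Y' : Type*} [TopologicalSpace W] [TopologicalSpace Y']
    {f : W → Y'} (h : ∀ x : W, ∃ s, IsOpen s ∧ x ∈ s ∧ ContinuousOn f s) : Continuous f := by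
  rw [continuous_iff_continuousAt]
  intro x
  obtain ⟨s, hso, hxs, hc⟩ := h x
  exact hc.continuousAt (hso.mem_nhds hxs)

theorem pk_restrict {Z : Type*} [TopologicalSpace Z] {n : ℕ} (κ : Fin n → ℕ)
    (u : Fin n → Σ k : ℕ, Fin k → Z) (hu : ∀ i, (u i).1 = κ i) :
    pk ⟨n, u⟩ = ⟨∑ i, κ i, fun j => (sigmaFiber (κ ((fse κ).symm j).1)).symm
        ⟨u ((fse κ).symm j).1, hu _⟩ ((fse κ).symm j).2⟩ := by
  have hκ : κ = fun i => (u i).1 := funext fun i => (hu i).symm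
  subst hκ
  simp only [sigmaFiber_symm_apply]
  rfl

theorem pk_contOn {Z : Type*} [TopologicalSpace Z] (n : ℕ) (κ : Fin n → ℕ) :
    ContinuousOn (fun u : Fin n → Σ k : ℕ, Fin k → Z => pk ⟨n, u⟩)
      {u | ∀ i, (u i).1 = κ i} := by
  rw [continuousOn_iff_continuous_restrict]
  have : ({u : Fin n → Σ k : ℕ, Fin k → Z | ∀ i, (u i).1 = κ i}.domRestrict
        (fun u : Fin n → Σ k : ℕ, Fin k → Z => pk ⟨n, u⟩))
      = fun p : {u : Fin n → Σ k : ℕ, Fin k → Z | ∀ i, (u i).1 = κ i} =>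
        (⟨∑ i, κ i, fun j => (sigmaFiber (κ ((fse κ).symm j).1)).symm
          ⟨p.1 ((fse κ).symm j).1, p.2 _⟩ ((fse κ).symm j).2⟩ : Σ N : ℕ, Fin N → Z) := by
    funext p
    exact pk_restrict κ p.1 p.2
  rw [this]
  exact continuous_sigmaMk.comp (continuous_pi fun j =>
    (continuous_apply _).comp ((sigmaFiber _).symm.continuous.comp
      (Continuous.subtype_mk ((continuous_apply _).comp continuous_subtype_val) _)))

theorem pk_cont {Z : Type*} [TopologicalSpace Z] : Continuous (pk (Z := Z)) := by
  apply continuous_sigma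
  intro n
  apply continuous_of_cover
  intro u
  exact ⟨{v : Fin n → Σ k : ℕ, Fin k → Z | ∀ i, (v i).1 = (u i).1},
    isOpen_shape _, fun i => rfl, pk_contOn n _⟩

theorem Red2.trans {X₁ Y₁ X₂ Y₂ X₃ Y₃ : Type*}
    [TopologicalSpace X₁] [TopologicalSpace Y₁] [TopologicalSpace X₂]
    [TopologicalSpace Y₂] [TopologicalSpace X₃] [TopologicalSpace Y₃]
    {f : X₁ → Y₁} {g : X₂ → Y₂} {h : X₃ → Y₃}
    (r1 : Red2 f g) (r2 : Red2 g h) : Red2 f h := by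
  obtain ⟨A₁, F₁, G₁, hF₁, hG₁, hfg⟩ := r1
  obtain ⟨A₂, F₂, G₂, hF₂, hG₂, hgh⟩ := r2
  refine ⟨{p : X₁ × Y₃ | ∃ h2 : (G₁ p.1, p.2) ∈ A₂, (p.1, F₂ ⟨(G₁ p.1, p.2), h2⟩) ∈ A₁},
    fun q => F₁ ⟨(q.1.1, F₂ ⟨(G₁ q.1.1, q.1.2), q.2.choose⟩), q.2.choose_spec⟩,
    G₂ ∘ G₁, ?_, hG₂.comp hG₁, ?_⟩
  · apply hF₁.comp
    apply Continuous.subtype_mk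
    apply Continuous.prodMk (continuous_fst.comp continuous_subtype_val)
    apply hF₂.comp
    apply Continuous.subtype_mk
    exact ((hG₁.comp continuous_fst).prodMk continuous_snd).comp continuous_subtype_val
  · intro x
    obtain ⟨m2, e2⟩ := hgh (G₁ x)
    obtain ⟨m1, e1⟩ := hfg x
    have hmem : ∃ h2 : (G₁ x, h (G₂ (G₁ x))) ∈ A₂,
        (x, F₂ ⟨(G₁ x, h (G₂ (G₁ x))), h2⟩) ∈ A₁ := ⟨m2, by rw [← e2]; exact m1⟩
    refine ⟨hmem, ?_⟩
    have key : F₂ ⟨(G₁ x, h (G₂ (G₁ x))), hmem.choose⟩ = g (G₁ x) := by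
      rw [show (⟨(G₁ x, h (G₂ (G₁ x))), hmem.choose⟩ : A₂)
          = ⟨(G₁ x, h (G₂ (G₁ x))), m2⟩ from Subtype.ext rfl, ← e2]
    show f x = F₁ ⟨(x, F₂ ⟨(G₁ x, h (G₂ (G₁ x))), hmem.choose⟩), hmem.choose_spec⟩
    have hsub : (⟨(x, F₂ ⟨(G₁ x, h (G₂ (G₁ x))), hmem.choose⟩), hmem.choose_spec⟩ : A₁)
        = ⟨(x, g (G₁ x)), m1⟩ :=
      Subtype.ext (show (x, F₂ ⟨(G₁ x, h (G₂ (G₁ x))), hmem.choose⟩) = (x, g (G₁ x)) by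
        rw [key])
    rw [hsub]
    exact e1

/-- Reflexivity of `≤_ct`. -/
theorem ctRed_refl {X Y : Type*} [TopologicalSpace X] [TopologicalSpace Y] (f : X → Y) :
    Red2 f (ctSup f) := by
  refine ⟨{p : X × (Σ n : ℕ, Fin n → Y) | p.2.1 = 1},
    fun q => (sigmaFiber 1).symm ⟨q.1.2, q.2⟩ 0,
    fun x => ⟨1, fun _ => x⟩, ?_, ?_, ?_⟩
  · exact (continuous_apply _).comp ((sigmaFiber 1).symm.continuous.comp
      (Continuous.subtype_mk (continuous_snd.comp continuous_subtype_val) _))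
  · exact (continuous_sigmaMk (σ := fun n : ℕ => Fin n → X) (i := 1)).comp
      (continuous_pi fun _ => continuous_id)
  · intro x
    refine ⟨rfl, ?_⟩
    show f x = (sigmaFiber (π := fun n : ℕ => Fin n → Y) 1).symm ⟨⟨1, fun _ => f x⟩, rfl⟩ 0
    rw [sigmaFiber_symm_apply]

/-- `funPow m q ≤₂ ctSup q`. -/
theorem red2_funPow_ctSup {X Y : Type*} [TopologicalSpace X] [TopologicalSpace Y]
    (q : X → Y) (m : ℕ) : Red2 (funPow m q) (ctSup q) := by
  refine ⟨{p : (Fin m → X) × (Σ n : ℕ, Fin n → Y) | p.2.1 = m},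
    fun p => (sigmaFiber m).symm ⟨p.1.2, p.2⟩,
    fun v => (⟨m, v⟩ : Σ n : ℕ, Fin n → X), ?_, ?_, ?_⟩
  · exact (sigmaFiber m).symm.continuous.comp
      (Continuous.subtype_mk (continuous_snd.comp continuous_subtype_val) _)
  · exact continuous_sigmaMk (σ := fun n : ℕ => Fin n → X) (i := m)
  · intro v
    refine ⟨rfl, ?_⟩
    show funPow m q v
      = (sigmaFiber (π := fun n : ℕ => Fin n → Y) m).symm ⟨⟨m, fun i => q (v i)⟩, rfl⟩
    rw [sigmaFiber_symm_apply]
    rfl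

/-- `ctSup f ≤₂ (ctSup f)^m` for `m ≥ 1`. -/
theorem red2_ctSup_funPow {X Y : Type*} [TopologicalSpace X] [TopologicalSpace Y]
    (f : X → Y) (m : ℕ) (hm : 1 ≤ m) : Red2 (ctSup f) (funPow m (ctSup f)) := by
  refine ⟨Set.univ, fun p => p.1.2 ⟨0, hm⟩, fun s _ => s, ?_, continuous_pi fun _ => continuous_id,
    fun s => ⟨Set.mem_univ _, rfl⟩⟩
  exact (continuous_apply _).comp (continuous_snd.comp continuous_subtype_val)


section D

variable {X Y : Type*} [TopologicalSpace X] [TopologicalSpace Y]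

def Ad (X Y : Type*) : Set ((Σ n : ℕ, Fin n → Σ k : ℕ, Fin k → X) × (Σ N : ℕ, Fin N → Y)) :=
  {p | p.2.1 = ∑ i, (p.1.2 i).1}

def Fd : (Ad X Y) → Σ n : ℕ, Fin n → Σ k : ℕ, Fin k → Y :=
  fun q => ⟨q.1.1.1, unpk (fun i => (q.1.1.2 i).1)
    ((sigmaFiber (∑ i, (q.1.1.2 i).1)).symm ⟨q.1.2, q.2⟩)⟩

theorem Fd_contOn (n : ℕ) (κ : Fin n → ℕ) :
    ContinuousOn (Fd (X := X) (Y := Y))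
      {q | q.1.1 ∈ Sigma.mk n '' {v : Fin n → Σ k : ℕ, Fin k → X | ∀ i, (v i).1 = κ i}} := by
  have pf : ∀ q : {q : Ad X Y |
      q.1.1 ∈ Sigma.mk n '' {v : Fin n → Σ k : ℕ, Fin k → X | ∀ i, (v i).1 = κ i}},
      (q.1.1.2).1 = ∑ i, κ i := by
    rintro ⟨⟨⟨s, z⟩, hA⟩, hS⟩
    replace hS : s ∈ Sigma.mk n ''
      {v : Fin n → Σ k : ℕ, Fin k → X | ∀ i, (v i).1 = κ i} := hS
    obtain ⟨v, hv, rfl⟩ := hS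
    rw [show z.1 = ∑ i, (v i).1 from hA]
    exact Finset.sum_congr rfl fun i _ => hv i
  rw [continuousOn_iff_continuous_restrict]
  have hres : ({q : Ad X Y |
        q.1.1 ∈ Sigma.mk n '' {v : Fin n → Σ k : ℕ, Fin k → X | ∀ i, (v i).1 = κ i}}.domRestrict
        (Fd (X := X) (Y := Y)))
      = fun q => ⟨n, unpk κ ((sigmaFiber (∑ i, κ i)).symm ⟨q.1.1.2, pf q⟩)⟩ := by
    funext q
    obtain ⟨⟨⟨s, z⟩, hA⟩, hS⟩ := q
    replace hS : s ∈ Sigma.mk n ''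
      {v : Fin n → Σ k : ℕ, Fin k → X | ∀ i, (v i).1 = κ i} := hS
    obtain ⟨v, hv, rfl⟩ := hS
    have hκ : κ = fun i => (v i).1 := funext fun i => (hv i).symm
    subst hκ
    rfl
  rw [hres]
  exact continuous_sigmaMk.comp ((unpk_cont _).comp
    ((sigmaFiber _).symm.continuous.comp (Continuous.subtype_mk
      (continuous_snd.comp (continuous_subtype_val.comp continuous_subtype_val)) pf)))

theorem Fd_cont : Continuous (Fd (X := X) (Y := Y)) := by
  apply continuous_of_cover
  rintro ⟨⟨s, z⟩, hp⟩
  obtain ⟨n, u⟩ := s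
  refine ⟨_, ?_, ?_, Fd_contOn n fun i => (u i).1⟩
  · exact ((isOpenMap_sigmaMk (σ := fun n' : ℕ => Fin n' → Σ k : ℕ, Fin k → X)
        _ (isOpen_shape (Z := X) fun i => (u i).1)).preimage
      (continuous_fst.comp continuous_subtype_val))
  · exact ⟨u, fun i => rfl, rfl⟩

/-- `ctSup (ctSup h) ≤₂ ctSup h` : flattening. -/
theorem red2_ctSup_ctSup (h : X → Y) : Red2 (ctSup (ctSup h)) (ctSup h) := by
  refine ⟨Ad X Y, Fd, pk, Fd_cont, pk_cont, ?_⟩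
  intro s
  obtain ⟨n, u⟩ := s
  refine ⟨rfl, ?_⟩
  show ctSup (ctSup h) ⟨n, u⟩ = ⟨n, unpk (fun i => (u i).1)
    ((sigmaFiber (∑ i, (u i).1)).symm ⟨ctSup h (pk ⟨n, u⟩), rfl⟩)⟩
  refine Eq.trans ?_ (congrArg (fun w => (⟨n, unpk (fun i => (u i).1) w⟩ :
    Σ n : ℕ, Fin n → Σ k : ℕ, Fin k → Y))
    (sigmaFiber_symm_apply (c := ∑ i, (u i).1) (ctSup h (pk ⟨n, u⟩)) rfl).symm)
  exact (congrArg (Sigma.mk n) (unpk_pk (fun i => ctSup h (u i)))).symm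

end D

section M

variable {X₂ Y₂ X₃ Y₃ : Type*} [TopologicalSpace X₂] [TopologicalSpace Y₂]
  [TopologicalSpace X₃] [TopologicalSpace Y₃]

def Am (A : Set (X₂ × Y₃)) : Set ((Σ n : ℕ, Fin n → X₂) × (Σ n : ℕ, Fin n → Y₃)) :=
  {p | ∃ hn : p.2.1 = p.1.1, ∀ i : Fin p.1.1, (p.1.2 i, p.2.2 (Fin.cast hn.symm i)) ∈ A}

noncomputable def Fm (A : Set (X₂ × Y₃)) (F : A → Y₂) : (Am A) → Σ n : ℕ, Fin n → Y₂ :=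
  fun q => ⟨q.1.1.1, fun i => F ⟨(q.1.1.2 i, q.1.2.2 (Fin.cast q.2.choose.symm i)),
    q.2.choose_spec i⟩⟩

theorem Fm_contOn (A : Set (X₂ × Y₃)) (F : A → Y₂) (hF : Continuous F) (n : ℕ) :
    ContinuousOn (Fm A F) {q | q.1.1.1 = n} := by
  have pf1 : ∀ q : {q : Am A | q.1.1.1 = n}, (q.1.1.1).1 = n := fun q => q.2
  have pf2 : ∀ q : {q : Am A | q.1.1.1 = n}, (q.1.1.2).1 = n :=
    fun q => q.1.2.choose.trans q.2
  have pf3 : ∀ q : {q : Am A | q.1.1.1 = n}, ∀ i : Fin n,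
      ((sigmaFiber n).symm ⟨q.1.1.1, pf1 q⟩ i,
        (sigmaFiber n).symm ⟨q.1.1.2, pf2 q⟩ i) ∈ A := by
    rintro ⟨⟨⟨s, z⟩, hA⟩, hS⟩ i
    obtain ⟨n', w⟩ := s
    replace hS : n' = n := hS
    subst hS
    obtain ⟨N, zw⟩ := z
    obtain ⟨hn, hmem⟩ := hA
    replace hn : N = n' := hn
    subst hn
    rw [sigmaFiber_symm_apply, sigmaFiber_symm_apply]
    exact hmem i
  rw [continuousOn_iff_continuous_restrict]
  have hres : ({q : Am A | q.1.1.1 = n}.domRestrict (Fm A F))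
      = fun q => ⟨n, fun i => F ⟨((sigmaFiber n).symm ⟨q.1.1.1, pf1 q⟩ i,
          (sigmaFiber n).symm ⟨q.1.1.2, pf2 q⟩ i), pf3 q i⟩⟩ := by
    funext q
    obtain ⟨⟨⟨s, z⟩, hA⟩, hS⟩ := q
    obtain ⟨n', w⟩ := s
    replace hS : n' = n := hS
    subst hS
    obtain ⟨N, zw⟩ := z
    have hn : N = n' := hA.choose
    subst hn
    simp only [sigmaFiber_symm_apply]
    rfl
  rw [hres]
  apply continuous_sigmaMk.comp
  apply continuous_pi
  intro i
  apply hF.comp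
  apply Continuous.subtype_mk
  apply Continuous.prodMk
  · exact (continuous_apply i).comp ((sigmaFiber n).symm.continuous.comp
      (Continuous.subtype_mk
        (continuous_fst.comp (continuous_subtype_val.comp continuous_subtype_val)) pf1))
  · exact (continuous_apply i).comp ((sigmaFiber n).symm.continuous.comp
      (Continuous.subtype_mk
        (continuous_snd.comp (continuous_subtype_val.comp continuous_subtype_val)) pf2))

theorem Fm_cont (A : Set (X₂ × Y₃)) (F : A → Y₂) (hF : Continuous F) :
    Continuous (Fm A F) := by
  apply continuous_of_cover
  rintro ⟨⟨s, z⟩, hp⟩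
  refine ⟨{q : Am A | q.1.1.1 = s.1}, ?_, rfl, Fm_contOn A F hF s.1⟩
  exact (isOpen_fiber s.1).preimage (continuous_fst.comp continuous_subtype_val)

/-- If `g ≤₂ b` then `ctSup g ≤₂ ctSup b`. -/
theorem red2_ctSup_mono {g : X₂ → Y₂} {b : X₃ → Y₃} (r : Red2 g b) :
    Red2 (ctSup g) (ctSup b) := by
  obtain ⟨A, F, G, hF, hG, heq⟩ := r
  refine ⟨Am A, Fm A F, coprodMap fun n => funPow n G, Fm_cont A F hF, ?_, ?_⟩
  · apply continuous_sigma
    intro n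
    exact continuous_sigmaMk.comp (continuous_pi fun i => hG.comp (continuous_apply i))
  · intro s
    obtain ⟨n, v⟩ := s
    have hmem : ∃ hn : (ctSup b (coprodMap (fun n => funPow n G) ⟨n, v⟩)).1 = n,
        ∀ i : Fin n, (v i, (ctSup b (coprodMap (fun n => funPow n G) ⟨n, v⟩)).2
          (Fin.cast hn.symm i)) ∈ A :=
      ⟨rfl, fun i => (heq (v i)).choose⟩
    refine ⟨hmem, ?_⟩
    show ctSup g ⟨n, v⟩ = ⟨n, fun i => F ⟨(v i, _), hmem.choose_spec i⟩⟩
    exact congrArg (Sigma.mk n) (funext fun i => (heq (v i)).choose_spec)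

end M

end CTAux

/-- `≤_ct` is reflexive and transitive, and `⌈fⁿ⌉_{n∈ℕ} ≡₂ (⌈fⁿ⌉_{n∈ℕ})^m` for `m ≥ 1`. -/
theorem stmt19 :
    (∀ (X Y : Type u) [TopologicalSpace X] [TopologicalSpace Y] (f : X → Y), ctRed f f) ∧
    (∀ (X₁ Y₁ X₂ Y₂ X₃ Y₃ : Type u)
        [TopologicalSpace X₁] [TopologicalSpace Y₁] [TopologicalSpace X₂]
        [TopologicalSpace Y₂] [TopologicalSpace X₃] [TopologicalSpace Y₃]
        (f : X₁ → Y₁) (g : X₂ → Y₂) (h : X₃ → Y₃),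
      ctRed f g → ctRed g h → ctRed f h) ∧
    (∀ (X Y : Type u) [TopologicalSpace X] [TopologicalSpace Y] (f : X → Y) (m : ℕ),
      1 ≤ m →
      Red2 (ctSup f) (funPow m (ctSup f)) ∧ Red2 (funPow m (ctSup f)) (ctSup f)) := by
  refine ⟨?_, ?_, ?_⟩
  · intro X Y _ _ f
    exact ctRed_refl f
  · intro X₁ Y₁ X₂ Y₂ X₃ Y₃ _ _ _ _ _ _ f g h r1 r2
    exact r1.trans ((red2_ctSup_mono r2).trans (red2_ctSup_ctSup h))
  · intro X Y _ _ f m hm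
    exact ⟨red2_ctSup_funPow f m hm,
      (red2_funPow_ctSup (ctSup f) m).trans (red2_ctSup_ctSup f)⟩
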